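/- For all real s₁, s₂ with 0 < s₁^(q−1) ≤ s₂^(p−1) < 1 and every u ∈ [1, p/(p−1)): p·(s₁/s₂)·u^q − q·u^p − (p−q)·s₁ < 0. -/

import Mathlib

noncomputable section

open Real Set

/-- `H r z = r·z^(r-1) - (r-1)·z^r`. -/
def H (r z : ℝ) : ℝ := r * z ^ (r - 1) - (r - 1) * z ^ r

/-- `ω` is the inverse of `H r`, mapping `(0,1]` into `[1, r/(r-1))`,
    so that `H r (ω s) = s` for `s ∈ (0,1]`. -/
def IsOmega (r : ℝ) (ω : ℝ → ℝ) : Prop :=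
  ∀ s ∈ Set.Ioc (0 : ℝ) 1, ω s ∈ Set.Ico (1 : ℝ) (r / (r - 1)) ∧ H r (ω s) = s

/-- `τ(s₁,s₂,t) = ((p-q)/p)·(t^p - s₁)/(t^(p-q) - s₁/s₂)`. -/
def tau (p q s₁ s₂ t : ℝ) : ℝ :=
  ((p - q) / p) * ((t ^ p - s₁) / (t ^ (p - q) - s₁ / s₂))

/-- `F(τ)` from the paper, where `ω` plays the role of `ω_q`. -/
def Ffun (p q : ℝ) (ω : ℝ → ℝ) (τ : ℝ) : ℝ :=
  (τ / (1 - ω τ)) * (p - (q * (p - 1) / (q - 1)) * ω τ)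
    - q * (p * ω τ ^ (q - 1) - (p - 1) * ω τ ^ q)

/-- `A(s)` from the paper, where `ω` plays the role of `ω_q`. -/
def Afun (q : ℝ) (ω : ℝ → ℝ) (s : ℝ) : ℝ :=
  s * (ω s / ((q - 1) * (ω s - 1)) + ω s ^ q / s)

/-- for `(s₁,s₂)` in the domain `0 < s₁^(q−1) ≤ s₂^(p−1) < 1`
(`s₁, s₂ > 0`) and every `u ∈ [1, p/(p−1))`:
`p·(s₁/s₂)·u^q − q·u^p − (p−q)·s₁ < 0`. -/
theorem stmt_7 (p q : ℝ) (hq : 1 < q) (hqp : q < p)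
    (s₁ s₂ : ℝ) (hs₁ : 0 < s₁) (hs₂ : 0 < s₂)
    (h1 : 0 < s₁ ^ (q - 1)) (h2 : s₁ ^ (q - 1) ≤ s₂ ^ (p - 1))
    (h3 : s₂ ^ (p - 1) < 1) :
    ∀ u ∈ Set.Ico (1 : ℝ) (p / (p - 1)),
      p * (s₁ / s₂) * u ^ q - q * u ^ p - (p - q) * s₁ < 0 := by
  intro u hu
  obtain ⟨hu1, _⟩ := hu
  have hu0 : (0:ℝ) < u := lt_of_lt_of_le one_pos hu1
  have hp1 : (0:ℝ) < p - 1 := by linarith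
  have hq1 : (0:ℝ) < q - 1 := by linarith
  have hp0 : (0:ℝ) < p := by linarith
  -- s₁ < 1
  have hs₁1 : s₁ < 1 := by
    by_contra h
    push_neg at h
    have := Real.one_le_rpow h hq1.le
    linarith [lt_of_le_of_lt h2 h3]
  -- s₂ ≥ s₁ ^ ((q-1)/(p-1))
  have hstep : s₁ ^ ((q - 1) / (p - 1)) ≤ s₂ := by
    have := Real.rpow_le_rpow h1.le h2 (by positivity : (0:ℝ) ≤ (p-1)⁻¹)
    rw [← Real.rpow_mul hs₁.le, ← Real.rpow_mul hs₂.le,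
      mul_inv_cancel₀ hp1.ne', Real.rpow_one] at this
    calc s₁ ^ ((q - 1) / (p - 1)) = s₁ ^ ((q - 1) * (p - 1)⁻¹) := by
          rw [div_eq_mul_inv]
      _ ≤ s₂ := this
  -- s₁^((q-1)/(p-1)) > s₁^(q/p) since s₁ < 1 and (q-1)/(p-1) < q/p
  have hexp : (q - 1) / (p - 1) < q / p := by
    rw [div_lt_div_iff₀ hp1 hp0]
    nlinarith
  have hlt : s₁ ^ (q / p) < s₂ :=
    lt_of_lt_of_le (Real.rpow_lt_rpow_of_exponent_gt hs₁ hs₁1 hexp) hstep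
  -- hence s₁ / s₂ < s₁ ^ ((p-q)/p)
  have hkey : s₁ / s₂ < s₁ ^ ((p - q) / p) := by
    rw [div_lt_iff₀ hs₂]
    have e : (p - q) / p + q / p = 1 := by field_simp; ring
    calc s₁ = s₁ ^ ((p - q) / p) * s₁ ^ (q / p) := by
          rw [← Real.rpow_add hs₁, e, Real.rpow_one]
      _ < s₁ ^ ((p - q) / p) * s₂ := by
          apply mul_lt_mul_of_pos_left hlt (Real.rpow_pos_of_pos hs₁ _)
  -- AM-GM
  have hamgm : u ^ q * s₁ ^ ((p - q) / p) ≤ (q / p) * u ^ p + ((p - q) / p) * s₁ := by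
    have := Real.geom_mean_le_arith_mean2_weighted
      (by positivity : (0:ℝ) ≤ q / p)
      (by apply div_nonneg <;> linarith : (0:ℝ) ≤ (p - q) / p)
      (le_of_lt (Real.rpow_pos_of_pos hu0 p)) hs₁.le
      (by field_simp; ring : q / p + (p - q) / p = 1)
    rwa [← Real.rpow_mul hu0.le, show p * (q / p) = q by field_simp] at this
  have huq : (0:ℝ) < u ^ q := Real.rpow_pos_of_pos hu0 q
  have B := mul_lt_mul_of_pos_left (mul_lt_mul_of_pos_right hkey huq) hp0
  have C : p * (u ^ q * s₁ ^ ((p - q) / p)) ≤ q * u ^ p + (p - q) * s₁ := by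
    have h := mul_le_mul_of_nonneg_left hamgm hp0.le
    have e1 : p * (q / p * u ^ p + (p - q) / p * s₁) = q * u ^ p + (p - q) * s₁ := by
      field_simp
    rw [e1] at h; exact h
  have final : p * (s₁ / s₂) * u ^ q < q * u ^ p + (p - q) * s₁ := by
    calc p * (s₁ / s₂) * u ^ q = p * (s₁ / s₂ * u ^ q) := by ring
      _ < p * (s₁ ^ ((p - q) / p) * u ^ q) := B
      _ = p * (u ^ q * s₁ ^ ((p - q) / p)) := by ring
      _ ≤ q * u ^ p + (p - q) * s₁ := C
  linarith
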